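/- arXiv:0909.0811 — 2 statements merged into one kernel-verified Lean document; each statement's English description precedes it below -/
import Mathlib

section
/- For every β ∈ F_q, the number n₁(β) of w ∈ SO^-(2,q) with Tr(w) = β equals 2 − δ(1,q;β); explicitly, n₁(β) = 0 if β² − 1 is a nonzero square in F_q, n₁(β) = 1 if β² − 1 = 0, and n₁(β) = 2 if β² − 1 is a nonsquare in F_q. -/
open Matrix
open scoped BigOperators Classical

noncomputable section

abbrev Fq (r : ℕ) : Type := GaloisField 3 r
noncomputable instance (r : ℕ) : Fintype (Fq r) := Fintype.ofFinite _

def SOminus2 (r : ℕ) (ε : Fq r) : Finset (Matrix (Fin 2) (Fin 2) (Fq r)) :=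
  Finset.univ.filter (fun w => ∃ a b : Fq r, a ^ 2 - ε * b ^ 2 = 1 ∧ w = !![a, b * ε; b, a])

/-- `n₁(β)`, the number of elements of `SO⁻(2, q)` with trace `β`. -/
def nOne (r : ℕ) (ε : Fq r) (β : Fq r) : ℕ :=
  ((SOminus2 r ε).filter (fun w => w.trace = β)).card

/-- `δ(1, q; β) = #{α ∈ F_q^* : α + α⁻¹ = β}`. -/
def deltaOne (r : ℕ) (β : Fq r) : ℕ :=
  (Finset.univ.filter (fun α : Fq r => α ≠ 0 ∧ α + α⁻¹ = β)).card

lemma char3 (r : ℕ) : (3 : Fq r) = 0 := by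
  exact_mod_cast CharP.cast_eq_zero (Fq r) 3

lemma ringChar_Fq (r : ℕ) : ringChar (Fq r) = 3 := ringChar.eq _ 3

lemma nOne_eq_sqcard (r : ℕ) (ε : Fq r) (hε : ε ≠ 0) (β : Fq r) :
    nOne r ε β = (Finset.univ.filter fun b : Fq r => b ^ 2 = ε⁻¹ * (β ^ 2 - 1)).card := by
  have h3 := char3 r
  unfold nOne SOminus2
  rw [Finset.filter_filter]
  refine Finset.card_nbij' (fun w => w 1 0)
    (fun b => !![2 * β, b * ε; b, 2 * β]) ?_ ?_ ?_ ?_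
  · rintro w hw
    simp only [Finset.mem_coe, Finset.mem_filter, Finset.mem_univ, true_and] at hw ⊢
    obtain ⟨⟨a, b, hab, rfl⟩, htr⟩ := hw
    have htr' : a + a = β := by simpa [Matrix.trace_fin_two] using htr
    have ha : a = 2 * β := by linear_combination 2 * htr' - a * h3
    have hb : (!![a, b * ε; b, a] : Matrix (Fin 2) (Fin 2) (Fq r)) 1 0 = b := by simp
    rw [hb]
    field_simp
    linear_combination (β ^ 2 - ε * b ^ 2 + b ^ 2 * ε) * h3 - hab + ha * (a + 2 * β)
  · rintro b hb
    simp only [Finset.mem_coe, Finset.mem_filter, Finset.mem_univ, true_and] at hb ⊢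
    have hεb : ε * b ^ 2 = β ^ 2 - 1 := by
      field_simp at hb
      linear_combination hb
    constructor
    · exact ⟨2 * β, b, by linear_combination β ^ 2 * h3 - hεb, rfl⟩
    · simp [Matrix.trace_fin_two]
      linear_combination β * h3
  · rintro w hw
    simp only [Finset.mem_coe, Finset.mem_filter, Finset.mem_univ, true_and] at hw
    obtain ⟨⟨a, b, hab, rfl⟩, htr⟩ := hw
    have htr' : a + a = β := by simpa [Matrix.trace_fin_two] using htr
    have ha : a = 2 * β := by linear_combination 2 * htr' - a * h3
    subst ha
    simp
  · intro b _
    simp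

lemma deltaOne_eq_sqcard (r : ℕ) (β : Fq r) :
    deltaOne r β = (Finset.univ.filter fun s : Fq r => s ^ 2 = β ^ 2 - 1).card := by
  have h3 := char3 r
  unfold deltaOne
  refine Finset.card_nbij' (fun α => 2 * α - β) (fun s => 2 * (β + s)) ?_ ?_ ?_ ?_
  · rintro α hα
    simp only [Finset.mem_coe, Finset.mem_filter, Finset.mem_univ, true_and] at hα ⊢
    obtain ⟨hα0, hαβ⟩ := hα
    have key : α ^ 2 + 1 = β * α := by
      field_simp at hαβ
      linear_combination hαβ
    linear_combination 4 * key - h3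
  · rintro s hs
    simp only [Finset.mem_coe, Finset.mem_filter, Finset.mem_univ, true_and] at hs ⊢
    have hα0 : 2 * (β + s) ≠ 0 := by
      intro h
      have hbs : β + s = 0 := by linear_combination 2 * h - (β + s) * h3
      have h1 : (1 : Fq r) = 0 := by linear_combination hs - (s - β) * hbs
      exact one_ne_zero h1
    refine ⟨hα0, ?_⟩
    have hinv : (2 * (β + s))⁻¹ = β - 2 * (β + s) := by
      refine inv_eq_of_mul_eq_one_right ?_
      linear_combination (-4) * hs + (-2 * β ^ 2 - 2 * β * s + 1) * h3
    rw [hinv]; ring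
  · intro α hα
    linear_combination α * h3
  · intro s _
    linear_combination (β + s) * h3

theorem stmt14 (r : ℕ) (hr : 0 < r) (ε : Fq r) (hε : ¬ IsSquare ε) (β : Fq r) :
    (nOne r ε β : ℤ) = 2 - (deltaOne r β : ℤ)
    ∧ (IsSquare (β ^ 2 - 1) ∧ β ^ 2 - 1 ≠ 0 → nOne r ε β = 0)
    ∧ (β ^ 2 - 1 = 0 → nOne r ε β = 1)
    ∧ (¬ IsSquare (β ^ 2 - 1) → nOne r ε β = 2) := by
  have hε0 : ε ≠ 0 := fun h => hε (h ▸ ⟨0, by ring⟩)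
  have hchar : ringChar (Fq r) ≠ 2 := by rw [ringChar_Fq]; decide
  have hqε : quadraticChar (Fq r) ε = -1 := quadraticChar_neg_one_iff_not_isSquare.mpr hε
  have hqεinv : quadraticChar (Fq r) ε⁻¹ = -1 := by
    have h := _root_.map_mul (quadraticChar (Fq r)) ε ε⁻¹
    rw [mul_inv_cancel₀ hε0, _root_.map_one, hqε] at h
    linarith
  set c := β ^ 2 - 1 with hc
  have hn : (nOne r ε β : ℤ) = quadraticChar (Fq r) (ε⁻¹ * c) + 1 := by
    rw [nOne_eq_sqcard r ε hε0 β, ← quadraticChar_card_sqrts hchar (ε⁻¹ * c)]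
    congr 1
    rw [Set.toFinset_setOf]
  have hd : (deltaOne r β : ℤ) = quadraticChar (Fq r) c + 1 := by
    rw [deltaOne_eq_sqcard r β, ← quadraticChar_card_sqrts hchar c]
    congr 1
    rw [Set.toFinset_setOf]
  refine ⟨?_, ?_, ?_, ?_⟩
  · by_cases h0 : c = 0
    · rw [hn, hd, h0, mul_zero, MulChar.map_zero]; ring
    · rw [hn, hd, _root_.map_mul, hqεinv]
      ring
  · rintro ⟨hsq, h0⟩
    have h1 : quadraticChar (Fq r) c = 1 := (quadraticChar_one_iff_isSquare h0).mpr hsq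
    have h : (nOne r ε β : ℤ) = 0 := by
      rw [hn, _root_.map_mul, hqεinv, h1]; ring
    exact_mod_cast h
  · intro h0
    have h : (nOne r ε β : ℤ) = 1 := by
      rw [hn, h0, mul_zero, MulChar.map_zero]; ring
    exact_mod_cast h
  · intro hsq
    have h1 : quadraticChar (Fq r) c = -1 := quadraticChar_neg_one_iff_not_isSquare.mpr hsq
    have h : (nOne r ε β : ℤ) = 2 := by
      rw [hn, _root_.map_mul, hqεinv, h1]; ring
    exact_mod_cast h
end
end

section
/- Suppose r is even. Then for every β ∈ F_q, the number n₂(β) of w ∈ O^-(2,q) with Tr(w) = β equals: 0 if β² − 1 is a square different from −1 and 0; q+1 if β² − 1 = −1; 1 if β² − 1 = 0; and 2 if β² − 1 is a nonsquare in F_q. -/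
open Matrix
open scoped BigOperators Classical

noncomputable section

def deltaEps (r : ℕ) (ε : Fq r) : Matrix (Fin 2) (Fin 2) (Fq r) := !![1, 0; 0, -ε]

def Ominus2 (r : ℕ) (ε : Fq r) : Finset (Matrix (Fin 2) (Fin 2) (Fq r)) :=
  Finset.univ.filter (fun w => IsUnit w.det ∧ wᵀ * deltaEps r ε * w = deltaEps r ε)

/-- `n₂(β)`, the number of elements of `O⁻(2, q)` with trace `β`. -/
def nTwo (r : ℕ) (ε : Fq r) (β : Fq r) : ℕ :=
  ((Ominus2 r ε).filter (fun w => w.trace = β)).card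

section Aux
variable {r : ℕ} {ε : Fq r}

lemma three_eq_zero : (3 : Fq r) = 0 := by
  exact_mod_cast CharP.cast_eq_zero (Fq r) 3

lemma twoNeZeroFq : (2 : Fq r) ≠ 0 := by
  intro h
  have h3 : (3 : Fq r) = 0 := three_eq_zero
  exact one_ne_zero (α := Fq r) (by linear_combination h3 - h)

lemma eps_ne_zero (hε : ¬ IsSquare ε) : ε ≠ 0 := by
  rintro rfl; exact hε ⟨0, by ring⟩

lemma card_Fq (hr : 0 < r) : Fintype.card (Fq r) = 3 ^ r := by
  rw [← Nat.card_eq_fintype_card]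
  exact GaloisField.card 3 r hr.ne'

lemma isSquare_neg_one_Fq (hr : 0 < r) (hreven : Even r) : IsSquare (-1 : Fq r) := by
  rw [FiniteField.isSquare_neg_one_iff, card_Fq hr]
  obtain ⟨k, rfl⟩ := hreven
  have : 3 ^ (k + k) % 4 = 1 := by
    rw [← two_mul, pow_mul]
    simp [Nat.pow_mod]
  omega

lemma isSquare_div_nonsquare (hε : ¬ IsSquare ε) {m : Fq r} (hm : ¬ IsSquare m) :
    IsSquare (m * ε⁻¹) := by
  have hε0 := eps_ne_zero hε
  have hm0 : m ≠ 0 := by rintro rfl; exact hm ⟨0, by ring⟩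
  have h1 : quadraticChar (Fq r) m = -1 := quadraticChar_neg_one_iff_not_isSquare.mpr hm
  have h2 : quadraticChar (Fq r) ε = -1 := quadraticChar_neg_one_iff_not_isSquare.mpr hε
  have hsq : IsSquare (m * ε) := by
    rw [← quadraticChar_one_iff_isSquare (mul_ne_zero hm0 hε0), _root_.map_mul, h1, h2]; ring
  obtain ⟨u, hu⟩ := hsq
  refine ⟨u * ε⁻¹, ?_⟩
  have h4 : (u * ε⁻¹) * (u * ε⁻¹) = (u * u) * ε⁻¹ * ε⁻¹ := by ring
  rw [h4, ← hu]
  field_simp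

lemma prod_eq (a b c d : Fq r) :
    (!![a, b; c, d])ᵀ * deltaEps r ε * !![a, b; c, d] =
      !![a^2 - ε*c^2, a*b - ε*(c*d); a*b - ε*(c*d), b^2 - ε*d^2] := by
  ext i j
  fin_cases i <;> fin_cases j <;>
    simp [deltaEps, Matrix.mul_apply, Fin.sum_univ_two, Matrix.vecHead, Matrix.vecTail] <;> ring

lemma mem_Ominus2_iff (hε : ¬ IsSquare ε) (w : Matrix (Fin 2) (Fin 2) (Fq r)) :
    w ∈ Ominus2 r ε ↔ ∃ a c : Fq r, a^2 - ε*c^2 = 1 ∧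
      (w = !![a, ε*c; c, a] ∨ w = !![a, -(ε*c); c, -a]) := by
  have hε0 := eps_ne_zero hε
  constructor
  · intro hw
    rw [Ominus2, Finset.mem_filter] at hw
    obtain ⟨-, -, h⟩ := hw
    obtain ⟨a, b, c, d, rfl⟩ : ∃ a b c d, w = !![a, b; c, d] :=
      ⟨_, _, _, _, Matrix.eta_fin_two w⟩
    rw [prod_eq] at h
    have h00 : a^2 - ε*c^2 = 1 := by
      have := congrFun (congrFun h 0) 0; simpa [deltaEps] using this
    have h01 : a*b - ε*(c*d) = 0 := by
      have := congrFun (congrFun h 0) 1; simpa [deltaEps] using this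
    have h11 : b^2 - ε*d^2 = -ε := by
      have := congrFun (congrFun h 1) 1; simpa [deltaEps] using this
    refine ⟨a, c, h00, ?_⟩
    by_cases ha : a = 0
    · subst ha
      have hc0 : c ≠ 0 := by
        rintro rfl
        exact one_ne_zero (by linear_combination -h00)
      have hd0 : d = 0 := by
        have : ε * (c * d) = 0 := by linear_combination -h01
        rcases mul_eq_zero.mp this with h' | h'
        · exact absurd h' hε0
        · rcases mul_eq_zero.mp h' with h'' | h''
          · exact absurd h'' hc0
          · exact h''
      subst hd0
      have hb2 : (b - ε*c) * (b + ε*c) = 0 := by linear_combination h11 + ε * h00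
      rcases mul_eq_zero.mp hb2 with h' | h'
      · have hb : b = ε*c := by linear_combination h'
        subst hb; exact Or.inl rfl
      · have hb : b = -(ε*c) := by linear_combination h'
        subst hb; right; norm_num
    · have hd2 : ε * ((d - a) * (d + a)) = 0 := by
        linear_combination (a*b + ε*(c*d)) * h01 + (-(a^2)) * h11 + (-(ε*d^2)) * h00
      have hd2' : (d - a) * (d + a) = 0 := by
        rcases mul_eq_zero.mp hd2 with h' | h'
        · exact absurd h' hε0
        · exact h'
      rcases mul_eq_zero.mp hd2' with h' | h'
      · have hda : d = a := by linear_combination h'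
        have hb : b = ε*c := by
          have h2 : a * (b - ε*c) = 0 := by linear_combination h01 + ε * c * h'
          rcases mul_eq_zero.mp h2 with h'' | h''
          · exact absurd h'' ha
          · linear_combination h''
        subst hda hb; exact Or.inl rfl
      · have hda : d = -a := by linear_combination h'
        have hb : b = -(ε*c) := by
          have h2 : a * (b + ε*c) = 0 := by linear_combination h01 + ε * c * h'
          rcases mul_eq_zero.mp h2 with h'' | h''
          · exact absurd h'' ha
          · linear_combination h''
        subst hda hb; exact Or.inr rfl
  · rintro ⟨a, c, h1, rfl | rfl⟩ <;>
      rw [Ominus2, Finset.mem_filter] <;>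
      refine ⟨Finset.mem_univ _, ?_, ?_⟩
    · rw [Matrix.det_fin_two_of]
      apply IsUnit.of_mul_eq_one 1
      rw [mul_one]; linear_combination h1
    · rw [prod_eq, show a*(ε*c) - ε*(c*a) = 0 from by ring,
        show (ε*c)^2 - ε*a^2 = -ε from by linear_combination (-ε)*h1, h1, deltaEps]
    · rw [Matrix.det_fin_two_of]
      apply IsUnit.of_mul_eq_one (-1)
      have h2 : a * -a - -(ε*c) * c = -1 := by linear_combination -h1
      rw [h2]; ring
    · rw [prod_eq, show a*(-(ε*c)) - ε*(c*(-a)) = 0 from by ring,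
        show (-(ε*c))^2 - ε*(-a)^2 = -ε from by linear_combination (-ε)*h1, h1, deltaEps]

lemma circle_card (hr : 0 < r) (hε : ¬ IsSquare ε) :
    (Finset.univ.filter (fun p : Fq r × Fq r => p.1^2 - ε*p.2^2 = 1)).card = 3^r + 1 := by
  have hε0 := eps_ne_zero hε
  have h3 : (3 : Fq r) = 0 := three_eq_zero
  have h2 : (2 : Fq r) ≠ 0 := twoNeZeroFq
  set f : Fq r → Fq r × Fq r :=
    fun t => ((1 + ε*t^2) / (1 - ε*t^2), -t / (1 - ε*t^2)) with hf
  have hden : ∀ t : Fq r, 1 - ε*t^2 ≠ 0 := by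
    intro t h
    have ht : t ≠ 0 := by
      rintro rfl
      exact one_ne_zero (α := Fq r) (by linear_combination h)
    apply hε
    refine ⟨t⁻¹, ?_⟩
    have he : ε * t^2 = 1 := by linear_combination -h
    field_simp
    linear_combination he
  have hfst' : ∀ t : Fq r, (f t).1 + 1 = 2 / (1 - ε*t^2) := by
    intro t
    rw [hf]
    simp only
    rw [div_add' _ _ _ (hden t)]
    congr 1
    ring
  have hfst : ∀ t : Fq r, (f t).1 + 1 ≠ 0 := by
    intro t
    rw [hfst' t]
    exact div_ne_zero h2 (hden t)
  have hinv : ∀ t : Fq r, (f t).2 / ((f t).1 + 1) = t := by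
    intro t
    rw [hfst' t, hf]
    simp only
    rw [div_div_div_cancel_right₀ (hden t) _ _, div_eq_iff h2]
    linear_combination -t * h3
  have hcirc : ∀ t : Fq r, (f t).1^2 - ε*(f t).2^2 = 1 := by
    intro t
    rw [hf]
    simp only
    rw [div_pow, div_pow, ← mul_div_assoc, div_sub_div_same,
      div_eq_one_iff_eq (pow_ne_zero 2 (hden t))]
    linear_combination (ε * t^2) * h3
  have hinj : Function.Injective f := by
    intro t t' h
    have := hinv t
    rw [h, hinv t'] at this
    exact this.symm
  have key : (Finset.univ.filter (fun p : Fq r × Fq r => p.1^2 - ε*p.2^2 = 1))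
      = insert ((-1 : Fq r), (0 : Fq r)) (Finset.univ.image f) := by
    ext p
    simp only [Finset.mem_filter, Finset.mem_univ, true_and, Finset.mem_insert,
      Finset.mem_image]
    constructor
    · intro hp
      by_cases h1 : p.1 = -1
      · left
        have hz : ε * p.2^2 = 0 := by linear_combination -hp + (p.1 - 1) * h1
        have h2' : p.2 = 0 := by
          rcases mul_eq_zero.mp hz with h' | h'
          · exact absurd h' hε0
          · exact pow_eq_zero_iff (two_ne_zero) |>.mp h'
        exact Prod.ext h1 h2'
      · right
        have hp1 : p.1 + 1 ≠ 0 := fun h => h1 (by linear_combination h)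
        refine ⟨p.2 / (p.1 + 1), ?_⟩
        have hsimp : 1 - ε * (p.2 / (p.1 + 1))^2 = 2 * (p.1 + 1) / (p.1 + 1)^2 := by
          rw [div_pow, ← mul_div_assoc, eq_div_iff (pow_ne_zero 2 hp1), sub_mul,
            div_mul_cancel₀ _ (pow_ne_zero 2 hp1), one_mul]
          linear_combination hp
        have hd2 : (2 * (p.1 + 1)) / (p.1 + 1)^2 ≠ 0 :=
          div_ne_zero (mul_ne_zero h2 hp1) (pow_ne_zero 2 hp1)
        apply Prod.ext
        · show (1 + ε * (p.2 / (p.1 + 1))^2) / (1 - ε * (p.2 / (p.1 + 1))^2) = p.1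
          rw [hsimp, div_eq_iff hd2]
          field_simp
          linear_combination -hp
        · show -(p.2 / (p.1 + 1)) / (1 - ε * (p.2 / (p.1 + 1))^2) = p.2
          rw [hsimp, div_eq_iff hd2]
          field_simp
          linear_combination (-p.2) * h3
    · rintro (rfl | ⟨t, rfl⟩)
      · norm_num
      · exact hcirc t
  rw [key, Finset.card_insert_of_notMem, Finset.card_image_of_injective _ hinj,
    Finset.card_univ, card_Fq hr, Nat.add_comm]
  · intro hmem
    obtain ⟨t, -, ht⟩ := Finset.mem_image.mp hmem
    apply hfst t
    rw [ht]
    norm_num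

lemma rot_inj (β : Fq r) : Function.Injective (fun c : Fq r => !![-β, ε*c; c, -β]) := by
  intro c c' h
  have := congrFun (congrFun h 1) 0
  simpa using this

lemma ref_inj : Function.Injective
    (fun p : Fq r × Fq r => !![p.1, -(ε*p.2); p.2, -p.1]) := by
  intro p p' h
  have h1 := congrFun (congrFun h 0) 0
  have h2 := congrFun (congrFun h 1) 0
  simp only at h1 h2
  exact Prod.ext (by simpa using h1) (by simpa using h2)

lemma filter_ne (hε : ¬ IsSquare ε) {β : Fq r} (hβ : β ≠ 0) :
    (Ominus2 r ε).filter (fun w => w.trace = β)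
      = (Finset.univ.filter (fun c : Fq r => ε*c^2 = β^2 - 1)).image
          (fun c => !![-β, ε*c; c, -β]) := by
  have h3 : (3 : Fq r) = 0 := three_eq_zero
  ext w
  simp only [Finset.mem_filter, Finset.mem_image, Finset.mem_univ, true_and]
  constructor
  · rintro ⟨hO, htr⟩
    obtain ⟨a, c, heq, rfl | rfl⟩ := (mem_Ominus2_iff hε w).mp hO
    · rw [Matrix.trace_fin_two_of] at htr
      have ha : a = -β := by linear_combination -htr + a * h3
      refine ⟨c, ?_, ?_⟩
      · linear_combination -heq + (a - β) * ha
      · rw [ha]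
    · rw [Matrix.trace_fin_two_of] at htr
      exact absurd (by linear_combination -htr) hβ
  · rintro ⟨c, hc, rfl⟩
    refine ⟨(mem_Ominus2_iff hε _).mpr ⟨-β, c, ?_, Or.inl rfl⟩, ?_⟩
    · linear_combination -hc
    · rw [Matrix.trace_fin_two_of]
      linear_combination -β * h3

lemma filter_zero (hr : 0 < r) (hreven : Even r) (hε : ¬ IsSquare ε) :
    (Ominus2 r ε).filter (fun w => w.trace = 0)
      = (Finset.univ.filter (fun p : Fq r × Fq r => p.1^2 - ε*p.2^2 = 1)).image
          (fun p => !![p.1, -(ε*p.2); p.2, -p.1]) := by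
  have hε0 := eps_ne_zero hε
  have h2 : (2 : Fq r) ≠ 0 := twoNeZeroFq
  ext w
  simp only [Finset.mem_filter, Finset.mem_image, Finset.mem_univ, true_and]
  constructor
  · rintro ⟨hO, htr⟩
    obtain ⟨a, c, heq, rfl | rfl⟩ := (mem_Ominus2_iff hε w).mp hO
    · rw [Matrix.trace_fin_two_of] at htr
      have ha : a = 0 := by
        have h2a : (2 : Fq r) * a = 0 := by linear_combination htr
        rcases mul_eq_zero.mp h2a with h' | h'
        · exact absurd h' h2
        · exact h'
      have hc0 : c ≠ 0 := by
        rintro rfl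
        apply one_ne_zero (α := Fq r)
        linear_combination -heq + a * ha
      have heq0 : ε * c^2 = -1 := by linear_combination -heq + a * ha
      obtain ⟨u, hu⟩ := isSquare_neg_one_Fq hr hreven
      exfalso
      apply hε
      refine ⟨u * c⁻¹, ?_⟩
      field_simp
      linear_combination heq0 + hu
    · rw [Matrix.trace_fin_two_of] at htr
      exact ⟨(a, c), heq, rfl⟩
  · rintro ⟨p, hp, rfl⟩
    refine ⟨(mem_Ominus2_iff hε _).mpr ⟨p.1, p.2, hp, Or.inr rfl⟩, ?_⟩
    rw [Matrix.trace_fin_two_of]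
    ring

end Aux

theorem stmt15 (r : ℕ) (hr : 0 < r) (hreven : Even r) (ε : Fq r) (hε : ¬ IsSquare ε)
    (β : Fq r) :
    (IsSquare (β ^ 2 - 1) ∧ β ^ 2 - 1 ≠ -1 ∧ β ^ 2 - 1 ≠ 0 → nTwo r ε β = 0)
    ∧ (β ^ 2 - 1 = -1 → nTwo r ε β = 3 ^ r + 1)
    ∧ (β ^ 2 - 1 = 0 → nTwo r ε β = 1)
    ∧ (¬ IsSquare (β ^ 2 - 1) → nTwo r ε β = 2) := by
  have hε0 := eps_ne_zero hε
  have h2 : (2 : Fq r) ≠ 0 := twoNeZeroFq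
  have hcount : ∀ hβ : β ≠ 0, nTwo r ε β
      = (Finset.univ.filter (fun c : Fq r => ε*c^2 = β^2 - 1)).card := by
    intro hβ
    rw [nTwo, filter_ne hε hβ, Finset.card_image_of_injective _ (rot_inj β)]
  refine ⟨?_, ?_, ?_, ?_⟩
  · rintro ⟨hsq, hne1, hne0⟩
    have hβ : β ≠ 0 := by
      rintro rfl
      apply hne1
      norm_num
    rw [hcount hβ, Finset.card_eq_zero, Finset.filter_eq_empty_iff]
    intro c _
    intro hc
    have hc0 : c ≠ 0 := by
      rintro rfl
      apply hne0
      rw [← hc]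
      ring
    obtain ⟨u, hu⟩ := hsq
    apply hε
    refine ⟨u * c⁻¹, ?_⟩
    field_simp
    linear_combination hc + hu
  · intro h
    have hβ : β = 0 := by
      have : β ^ 2 = 0 := by linear_combination h
      exact pow_eq_zero_iff (two_ne_zero) |>.mp this
    subst hβ
    rw [nTwo, filter_zero hr hreven hε, Finset.card_image_of_injective _ ref_inj,
      circle_card hr hε]
  · intro h
    have hβ : β ≠ 0 := by
      rintro rfl
      apply one_ne_zero (α := Fq r)
      linear_combination -h
    rw [hcount hβ]
    have : (Finset.univ.filter (fun c : Fq r => ε*c^2 = β^2 - 1)) = {0} := by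
      ext c
      simp only [Finset.mem_filter, Finset.mem_univ, true_and, Finset.mem_singleton]
      constructor
      · intro hc
        have : ε * c^2 = 0 := by rw [hc, h]
        rcases mul_eq_zero.mp this with h' | h'
        · exact absurd h' hε0
        · exact pow_eq_zero_iff (two_ne_zero) |>.mp h'
      · rintro rfl
        rw [h]; ring
    rw [this, Finset.card_singleton]
  · intro hnsq
    have hβ : β ≠ 0 := by
      rintro rfl
      apply hnsq
      have : (0:Fq r) ^ 2 - 1 = -1 := by ring
      rw [this]
      exact isSquare_neg_one_Fq hr hreven
    have hm0 : β^2 - 1 ≠ 0 := by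
      intro h
      exact hnsq (h ▸ IsSquare.zero)
    obtain ⟨u, hu⟩ := isSquare_div_nonsquare hε hnsq
    have hu0 : u ≠ 0 := by
      rintro rfl
      apply hm0
      have : (β^2-1) * ε⁻¹ * ε = 0 * 0 * ε := by rw [← hu]
      rwa [inv_mul_cancel_right₀ hε0, zero_mul, zero_mul] at this
    rw [hcount hβ]
    have hset : (Finset.univ.filter (fun c : Fq r => ε*c^2 = β^2 - 1)) = {u, -u} := by
      ext c
      simp only [Finset.mem_filter, Finset.mem_univ, true_and, Finset.mem_insert,
        Finset.mem_singleton]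
      constructor
      · intro hc
        have hfac : (c - u) * (c + u) = 0 := by
          have hεu : ε * (u * u) = β^2 - 1 := by
            have : ε * ((β^2-1) * ε⁻¹) = β^2 - 1 := by field_simp
            rw [hu] at this
            exact this
          have : ε * ((c - u) * (c + u)) = 0 := by linear_combination hc - hεu
          rcases mul_eq_zero.mp this with h' | h'
          · exact absurd h' hε0
          · exact h'
        rcases mul_eq_zero.mp hfac with h' | h'
        · left; linear_combination h'
        · right; linear_combination h'
      · have hεu : ε * (u * u) = β^2 - 1 := by
          have : ε * ((β^2-1) * ε⁻¹) = β^2 - 1 := by field_simp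
          rw [hu] at this
          exact this
        rintro (rfl | rfl)
        · linear_combination hεu
        · linear_combination hεu
    rw [hset, Finset.card_pair]
    intro h
    apply hu0
    have : (2:Fq r) * u = 0 := by linear_combination h
    rcases mul_eq_zero.mp this with h' | h'
    · exact absurd h' h2
    · exact h'
end
end
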